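/- Let y^0, a ∈ ℝ^p, c ∈ ℝ, β > 0. The minimizer over y ∈ ℝ^p of (c + ⟨a, y - y^0⟩)₊ + (1/(2β)) ‖y - y^0‖² is y⁺ = y^0 - min{β, (c)₊/‖a‖²} · a (with the convention that the minimum equals β if a = 0 and c > 0, and y⁺ = y^0 if c ≤ 0). -/

import Mathlib

set_option maxHeartbeats 1000000


open RealInnerProductSpace

/-- The minimizer of y ↦ (c + ⟨a, y - y⁰⟩)₊ + (1/(2β))‖y - y⁰‖² is
y⁺ = y⁰ - min{β, (c)₊/‖a‖²} a. -/
theorem stmt_6 (p : ℕ) (y0 a : EuclideanSpace ℝ (Fin p)) (c β : ℝ)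
    (hβ : 0 < β) (ha : a ≠ 0) :
    let h : EuclideanSpace ℝ (Fin p) → ℝ := fun y =>
      max (c + ⟪a, y - y0⟫) 0 + 1 / (2 * β) * ‖y - y0‖ ^ 2
    let yplus := y0 - (min β (max c 0 / ‖a‖ ^ 2)) • a
    ∀ y, h yplus ≤ h y := by
  intro h yplus y
  have hA : (0:ℝ) < ‖a‖ := norm_pos_iff.mpr ha
  have hA2 : (0:ℝ) < ‖a‖ ^ 2 := by positivity
  set t : ℝ := min β (max c 0 / ‖a‖ ^ 2) with ht
  have hyp : yplus - y0 = -(t • a) := by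
    simp [yplus, ht]
  have hip : ⟪a, yplus - y0⟫ = -(t * ‖a‖ ^ 2) := by
    rw [hyp, inner_neg_right, real_inner_smul_right, real_inner_self_eq_norm_sq]
  have hnp : ‖yplus - y0‖ ^ 2 = t ^ 2 * ‖a‖ ^ 2 := by
    rw [hyp, norm_neg, norm_smul, mul_pow, Real.norm_eq_abs, sq_abs]
  set u := y - y0 with hu
  have hs : (0:ℝ) ≤ ‖u‖ := norm_nonneg u
  have hcs : -(‖a‖ * ‖u‖) ≤ ⟪a, u⟫ := neg_le_of_abs_le (abs_real_inner_le_norm a u)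
  have hm1 : c + ⟪a, u⟫ ≤ max (c + ⟪a, u⟫) 0 := le_max_left _ _
  have hm0 : (0:ℝ) ≤ max (c + ⟪a, u⟫) 0 := le_max_right _ _
  show max (c + ⟪a, yplus - y0⟫) 0 + 1 / (2 * β) * ‖yplus - y0‖ ^ 2 ≤
      max (c + ⟪a, u⟫) 0 + 1 / (2 * β) * ‖u‖ ^ 2
  rw [hip, hnp]
  rcases le_or_gt c 0 with hc | hc
  · have hmax : max c 0 = 0 := max_eq_right hc
    have ht0 : t = 0 := by rw [ht, hmax]; simp [le_of_lt hβ]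
    rw [ht0]
    have : max (c + -(0 * ‖a‖ ^ 2)) 0 = 0 := by
      rw [max_eq_right]; linarith
    rw [this]
    have h1 : 0 ≤ 1 / (2 * β) * ‖u‖ ^ 2 := by positivity
    nlinarith
  · have hmax : max c 0 = c := max_eq_left hc.le
    rw [ht, hmax] at *
    rcases le_or_gt (c / ‖a‖ ^ 2) β with hcb | hcb
    · have htv : min β (c / ‖a‖ ^ 2) = c / ‖a‖ ^ 2 := min_eq_right hcb
      rw [htv]
      have hce : c / ‖a‖ ^ 2 * ‖a‖ ^ 2 = c := div_mul_cancel₀ c (ne_of_gt hA2)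
      have hmz : max (c + -(c / ‖a‖ ^ 2 * ‖a‖ ^ 2)) 0 = 0 := by
        rw [hce]; simp
      rw [hmz]
      have hcbA : c ≤ β * ‖a‖ ^ 2 := by
        rw [div_le_iff₀ hA2] at hcb; linarith
      set m := max (c + ⟪a, u⟫) 0 with hmdef
      clear_value m
      have hm1' : c - ‖a‖ * ‖u‖ ≤ m := by
        calc c - ‖a‖ * ‖u‖ ≤ c + ⟪a, u⟫ := by linarith
        _ ≤ m := hm1
      have hkey : (c / ‖a‖ ^ 2) ^ 2 * ‖a‖ ^ 2 = c ^ 2 / ‖a‖ ^ 2 := by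
        field_simp
      rw [hkey, zero_add]
      rw [div_le_iff₀ hA2] at hcb
      have key : c ^ 2 / ‖a‖ ^ 2 ≤ 2 * β * m + ‖u‖ ^ 2 := by
        rw [div_le_iff₀ hA2]
        have hq : 0 ≤ m - c + ‖a‖ * ‖u‖ := by linarith
        have hAs : 0 ≤ ‖a‖ * ‖u‖ := mul_nonneg hA.le hs
        have hβc : 0 ≤ β * ‖a‖ ^ 2 - c := by linarith
        rcases le_or_gt m c with hmc | hmc
        · nlinarith [mul_nonneg hq (show 0 ≤ ‖a‖ * ‖u‖ + c - m by linarith),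
            mul_nonneg hm0 hβc, mul_nonneg hm0 hm0]
        · nlinarith [mul_nonneg hβc (show 0 ≤ m - c by linarith),
            mul_nonneg hβc hc.le, mul_nonneg (show 0 ≤ m - c by linarith) hc.le,
            sq_nonneg (‖a‖ * ‖u‖)]
      have e : 1 / (2 * β) * (2 * β * m + ‖u‖ ^ 2) = m + 1 / (2 * β) * ‖u‖ ^ 2 := by
        field_simp
      calc 1 / (2 * β) * (c ^ 2 / ‖a‖ ^ 2)
          ≤ 1 / (2 * β) * (2 * β * m + ‖u‖ ^ 2) := by
            apply mul_le_mul_of_nonneg_left key (by positivity)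
        _ = m + 1 / (2 * β) * ‖u‖ ^ 2 := e
    · have htv : min β (c / ‖a‖ ^ 2) = β := min_eq_left hcb.le
      rw [htv]
      rw [lt_div_iff₀ hA2] at hcb
      have hmz : max (c + -(β * ‖a‖ ^ 2)) 0 = c - β * ‖a‖ ^ 2 := by
        rw [max_eq_left]; linarith; linarith
      rw [hmz]
      have h2β : (0:ℝ) < 2 * β := by linarith
      have e1 : 1 / (2 * β) * (β ^ 2 * ‖a‖ ^ 2) = β * ‖a‖ ^ 2 / 2 := by
        field_simp
      have e2 : (‖u‖ - β * ‖a‖) ^ 2 / (2 * β) =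
          1 / (2 * β) * ‖u‖ ^ 2 - ‖a‖ * ‖u‖ + β * ‖a‖ ^ 2 / 2 := by
        field_simp; ring
      have e3 : (0:ℝ) ≤ (‖u‖ - β * ‖a‖) ^ 2 / (2 * β) := by positivity
      rw [e1]
      linarith
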